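/- Let F : M → M be local, increasing, and respect a.e. equality. Then every conditional left-inverse G_l of F and every conditional right-inverse G_r of F is a conditional inverse of F, i.e. each is local, increasing, satisfies F⁻(G(s)) ≤ s ≤ F⁺(G(s)) a.e. on {F(−∞) < s < F(+∞)}, G(s) = −∞ a.e. on {s < F(−∞)}, and G(s) = +∞ a.e. on {F(+∞) < s}, for every s ∈ M. -/

import Mathlib

open MeasureTheory

variable {Ω : Type*} [MeasurableSpace Ω]

/-- `M`: the measurable functions `Ω → [-∞, ∞]`. -/
def MSp (Ω : Type*) [MeasurableSpace Ω] : Type _ := {f : Ω → EReal // Measurable f}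

/-- The constant function `+∞` as an element of `M`. -/
noncomputable def MSp.mtop (Ω : Type*) [MeasurableSpace Ω] : MSp Ω := ⟨fun _ => ⊤, measurable_const⟩

/-- The constant function `-∞` as an element of `M`. -/
noncomputable def MSp.mbot (Ω : Type*) [MeasurableSpace Ω] : MSp Ω := ⟨fun _ => ⊥, measurable_const⟩

open Classical in
/-- The pointwise piecewise combination `1_A f + 1_{Aᶜ} g`. -/
noncomputable def pcf (A : Set Ω) (f g : Ω → EReal) : Ω → EReal :=
  fun ω => if ω ∈ A then f ω else g ω

/-- The piecewise combination `1_A m + 1_{Aᶜ} n` as an element of `M`. -/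
noncomputable def MSp.pc (A : Set Ω) (hA : MeasurableSet A) (m n : MSp Ω) : MSp Ω :=
  ⟨pcf A m.1 n.1, by classical unfold pcf; exact Measurable.ite hA m.2 n.2⟩

/-- `F : M → M` respects `P`-a.e. equality. -/
def RespectsAE (P : Measure Ω) (F : MSp Ω → MSp Ω) : Prop :=
  ∀ m n : MSp Ω, m.1 =ᵐ[P] n.1 → (F m).1 =ᵐ[P] (F n).1

/-- `F : M → M` is increasing with respect to the `P`-a.e. order. -/
def IncreasingAE (P : Measure Ω) (F : MSp Ω → MSp Ω) : Prop :=
  ∀ m n : MSp Ω, m.1 ≤ᵐ[P] n.1 → (F m).1 ≤ᵐ[P] (F n).1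

/-- `F : M → M` is local: `F(1_A m + 1_{Aᶜ} n) = 1_A F(m) + 1_{Aᶜ} F(n)` a.e. -/
def LocalAE (P : Measure Ω) (F : MSp Ω → MSp Ω) : Prop :=
  ∀ (A : Set Ω) (hA : MeasurableSet A) (m n : MSp Ω),
    (F (MSp.pc A hA m n)).1 =ᵐ[P] pcf A (F m).1 (F n).1

/-- `g` is an essential infimum of the set `S ⊆ M`. -/
def IsEssInfM (P : Measure Ω) (S : Set (MSp Ω)) (g : MSp Ω) : Prop :=
  (∀ f ∈ S, g.1 ≤ᵐ[P] f.1) ∧ ∀ h : MSp Ω, (∀ f ∈ S, h.1 ≤ᵐ[P] f.1) → h.1 ≤ᵐ[P] g.1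

/-- `g` is an essential supremum of the set `S ⊆ M`. -/
def IsEssSupM (P : Measure Ω) (S : Set (MSp Ω)) (g : MSp Ω) : Prop :=
  (∀ f ∈ S, f.1 ≤ᵐ[P] g.1) ∧ ∀ h : MSp Ω, (∀ f ∈ S, f.1 ≤ᵐ[P] h.1) → g.1 ≤ᵐ[P] h.1

/-- `Gl` is a conditional left-inverse of `F`: writing `A_s = {F(+∞) ≥ s}`, one has
`Gl(s) = +∞` a.e. on `A_sᶜ` and, on `A_s`, `Gl(s)` agrees a.e. with an essential infimum
of `{ m ∈ M : F(m) ≥ s a.e. on A_s }`. -/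
def IsCondLeftInv (P : Measure Ω) (F Gl : MSp Ω → MSp Ω) : Prop :=
  ∀ s : MSp Ω,
    (∀ᵐ ω ∂P, ω ∉ {ω' | s.1 ω' ≤ (F (MSp.mtop Ω)).1 ω'} → (Gl s).1 ω = ⊤) ∧
    ∃ g : MSp Ω,
      IsEssInfM P
        {m : MSp Ω | ∀ᵐ ω ∂P, ω ∈ {ω' | s.1 ω' ≤ (F (MSp.mtop Ω)).1 ω'} →
          s.1 ω ≤ (F m).1 ω} g ∧
      ∀ᵐ ω ∂P, ω ∈ {ω' | s.1 ω' ≤ (F (MSp.mtop Ω)).1 ω'} → (Gl s).1 ω = g.1 ω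

/-- `Gr` is a conditional right-inverse of `F`: writing `B_s = {F(-∞) ≤ s}`, one has
`Gr(s) = -∞` a.e. on `B_sᶜ` and, on `B_s`, `Gr(s)` agrees a.e. with an essential supremum
of `{ m ∈ M : F(m) ≤ s a.e. on B_s }`. -/
def IsCondRightInv (P : Measure Ω) (F Gr : MSp Ω → MSp Ω) : Prop :=
  ∀ s : MSp Ω,
    (∀ᵐ ω ∂P, ω ∉ {ω' | (F (MSp.mbot Ω)).1 ω' ≤ s.1 ω'} → (Gr s).1 ω = ⊥) ∧
    ∃ g : MSp Ω,
      IsEssSupM P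
        {m : MSp Ω | ∀ᵐ ω ∂P, ω ∈ {ω' | (F (MSp.mbot Ω)).1 ω' ≤ s.1 ω'} →
          (F m).1 ω ≤ s.1 ω} g ∧
      ∀ᵐ ω ∂P, ω ∈ {ω' | (F (MSp.mbot Ω)).1 ω' ≤ s.1 ω'} → (Gr s).1 ω = g.1 ω

/-- `Fm` is a left-continuous version of `F`: `Fm(m) = -∞` a.e. on `{m = -∞}` and, on
`{m > -∞}`, `Fm(m)` agrees a.e. with an essential supremum of
`{ F(n) : n < m a.e. on {m > -∞} }`. -/
def IsLeftContVersion (P : Measure Ω) (F Fm : MSp Ω → MSp Ω) : Prop :=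
  ∀ m : MSp Ω,
    (∀ᵐ ω ∂P, m.1 ω = ⊥ → (Fm m).1 ω = ⊥) ∧
    ∃ g : MSp Ω,
      IsEssSupM P
        (F '' {n : MSp Ω | ∀ᵐ ω ∂P, ω ∈ {ω' | ⊥ < m.1 ω'} → n.1 ω < m.1 ω}) g ∧
      ∀ᵐ ω ∂P, ω ∈ {ω' | ⊥ < m.1 ω'} → (Fm m).1 ω = g.1 ω

/-- `Fp` is a right-continuous version of `F`: `Fp(m) = +∞` a.e. on `{m = +∞}` and, on
`{m < +∞}`, `Fp(m)` agrees a.e. with an essential infimum of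
`{ F(n) : n > m a.e. on {m < +∞} }`. -/
def IsRightContVersion (P : Measure Ω) (F Fp : MSp Ω → MSp Ω) : Prop :=
  ∀ m : MSp Ω,
    (∀ᵐ ω ∂P, m.1 ω = ⊤ → (Fp m).1 ω = ⊤) ∧
    ∃ g : MSp Ω,
      IsEssInfM P
        (F '' {n : MSp Ω | ∀ᵐ ω ∂P, ω ∈ {ω' | m.1 ω' < ⊤} → m.1 ω < n.1 ω}) g ∧
      ∀ᵐ ω ∂P, ω ∈ {ω' | m.1 ω' < ⊤} → (Fp m).1 ω = g.1 ω

/-- `G` is a conditional inverse of `F`: it is local, increasing, respects a.e. equality,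
and for every left-continuous version `F⁻` and right-continuous version `F⁺` of `F` and
every `s ∈ M`: `F⁻(G(s)) ≤ s ≤ F⁺(G(s))` a.e. on `{F(-∞) < s < F(+∞)}`, `G(s) = -∞` a.e.
on `{s < F(-∞)}`, and `G(s) = +∞` a.e. on `{F(+∞) < s}`. -/
def IsCondInverse (P : Measure Ω) (F G : MSp Ω → MSp Ω) : Prop :=
  LocalAE P G ∧ IncreasingAE P G ∧ RespectsAE P G ∧
  ∀ (Fm Fp : MSp Ω → MSp Ω), IsLeftContVersion P F Fm → IsRightContVersion P F Fp →
    ∀ s : MSp Ω,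
      (∀ᵐ ω ∂P, (F (MSp.mbot Ω)).1 ω < s.1 ω → s.1 ω < (F (MSp.mtop Ω)).1 ω →
        (Fm (G s)).1 ω ≤ s.1 ω ∧ s.1 ω ≤ (Fp (G s)).1 ω) ∧
      (∀ᵐ ω ∂P, s.1 ω < (F (MSp.mbot Ω)).1 ω → (G s).1 ω = ⊥) ∧
      (∀ᵐ ω ∂P, (F (MSp.mtop Ω)).1 ω < s.1 ω → (G s).1 ω = ⊤)


/-! ### Auxiliary lemmas -/

lemma pcf_of_mem {A : Set Ω} {f g : Ω → EReal} {ω : Ω} (h : ω ∈ A) : pcf A f g ω = f ω := by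
  simp only [pcf]; exact if_pos h

lemma pcf_of_not_mem {A : Set Ω} {f g : Ω → EReal} {ω : Ω} (h : ω ∉ A) : pcf A f g ω = g ω := by
  simp only [pcf]; exact if_neg h

/-- The target set of the conditional left inverse. -/
def SInf (P : Measure Ω) (F : MSp Ω → MSp Ω) (s : MSp Ω) : Set (MSp Ω) :=
  {m : MSp Ω | ∀ᵐ ω ∂P, ω ∈ {ω' | s.1 ω' ≤ (F (MSp.mtop Ω)).1 ω'} → s.1 ω ≤ (F m).1 ω}

/-- The target set of the conditional right inverse. -/
def SSup (P : Measure Ω) (F : MSp Ω → MSp Ω) (s : MSp Ω) : Set (MSp Ω) :=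
  {m : MSp Ω | ∀ᵐ ω ∂P, ω ∈ {ω' | (F (MSp.mbot Ω)).1 ω' ≤ s.1 ω'} → (F m).1 ω ≤ s.1 ω}

lemma mem_SInf_patch (P : Measure Ω) (F : MSp Ω → MSp Ω) (hFloc : LocalAE P F)
    {s m : MSp Ω} {B : Set Ω} (hB : MeasurableSet B)
    (h : ∀ᵐ ω ∂P, ω ∈ B → s.1 ω ≤ (F (MSp.mtop Ω)).1 ω → s.1 ω ≤ (F m).1 ω) :
    MSp.pc B hB m (MSp.mtop Ω) ∈ SInf P F s := by
  simp only [SInf, Set.mem_setOf_eq]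
  filter_upwards [hFloc B hB m (MSp.mtop Ω), h] with ω hloc hm hAs
  rw [hloc]
  by_cases hω : ω ∈ B
  · rw [pcf_of_mem hω]; exact hm hω hAs
  · rw [pcf_of_not_mem hω]; exact hAs

lemma mem_SSup_patch (P : Measure Ω) (F : MSp Ω → MSp Ω) (hFloc : LocalAE P F)
    {s m : MSp Ω} {B : Set Ω} (hB : MeasurableSet B)
    (h : ∀ᵐ ω ∂P, ω ∈ B → (F (MSp.mbot Ω)).1 ω ≤ s.1 ω → (F m).1 ω ≤ s.1 ω) :
    MSp.pc B hB m (MSp.mbot Ω) ∈ SSup P F s := by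
  simp only [SSup, Set.mem_setOf_eq]
  filter_upwards [hFloc B hB m (MSp.mbot Ω), h] with ω hloc hm hBs
  rw [hloc]
  by_cases hω : ω ∈ B
  · rw [pcf_of_mem hω]; exact hm hω hBs
  · rw [pcf_of_not_mem hω]; exact hBs

lemma essInfM_mono_on (P : Measure Ω) (F : MSp Ω → MSp Ω) (hFloc : LocalAE P F)
    {s t gs gt : MSp Ω} {B : Set Ω} (hB : MeasurableSet B)
    (hst : ∀ᵐ ω ∂P, ω ∈ B → s.1 ω ≤ t.1 ω)
    (hBt : ∀ᵐ ω ∂P, ω ∈ B → t.1 ω ≤ (F (MSp.mtop Ω)).1 ω)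
    (hgs : IsEssInfM P (SInf P F s) gs) (hgt : IsEssInfM P (SInf P F t) gt) :
    ∀ᵐ ω ∂P, ω ∈ B → gs.1 ω ≤ gt.1 ω := by
  have step1 : ∀ m ∈ SInf P F t, ∀ᵐ ω ∂P, ω ∈ B → gs.1 ω ≤ m.1 ω := by
    intro m hm
    have hmem : MSp.pc B hB m (MSp.mtop Ω) ∈ SInf P F s := by
      apply mem_SInf_patch P F hFloc hB
      filter_upwards [hm, hst, hBt] with ω h1 h2 h3 hωB _
      exact le_trans (h2 hωB) (h1 (h3 hωB))
    filter_upwards [hgs.1 _ hmem] with ω h1 hωB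
    rwa [show (MSp.pc B hB m (MSp.mtop Ω)).1 ω = m.1 ω from pcf_of_mem hωB] at h1
  have hlb : ∀ m ∈ SInf P F t, (MSp.pc B hB gs (MSp.mbot Ω)).1 ≤ᵐ[P] m.1 := by
    intro m hm
    filter_upwards [step1 m hm] with ω h1
    by_cases hω : ω ∈ B
    · rw [show (MSp.pc B hB gs (MSp.mbot Ω)).1 ω = gs.1 ω from pcf_of_mem hω]; exact h1 hω
    · rw [show (MSp.pc B hB gs (MSp.mbot Ω)).1 ω = ⊥ from pcf_of_not_mem hω]; exact bot_le
  filter_upwards [hgt.2 _ hlb] with ω h1 hωB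
  rwa [show (MSp.pc B hB gs (MSp.mbot Ω)).1 ω = gs.1 ω from pcf_of_mem hωB] at h1

lemma essSupM_mono_on (P : Measure Ω) (F : MSp Ω → MSp Ω) (hFloc : LocalAE P F)
    {s t gs gt : MSp Ω} {B : Set Ω} (hB : MeasurableSet B)
    (hst : ∀ᵐ ω ∂P, ω ∈ B → s.1 ω ≤ t.1 ω)
    (hBs : ∀ᵐ ω ∂P, ω ∈ B → (F (MSp.mbot Ω)).1 ω ≤ s.1 ω)
    (hgs : IsEssSupM P (SSup P F s) gs) (hgt : IsEssSupM P (SSup P F t) gt) :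
    ∀ᵐ ω ∂P, ω ∈ B → gs.1 ω ≤ gt.1 ω := by
  have step1 : ∀ m ∈ SSup P F s, ∀ᵐ ω ∂P, ω ∈ B → m.1 ω ≤ gt.1 ω := by
    intro m hm
    have hmem : MSp.pc B hB m (MSp.mbot Ω) ∈ SSup P F t := by
      apply mem_SSup_patch P F hFloc hB
      filter_upwards [hm, hst, hBs] with ω h1 h2 h3 hωB _
      exact le_trans (h1 (h3 hωB)) (h2 hωB)
    filter_upwards [hgt.1 _ hmem] with ω h1 hωB
    rwa [show (MSp.pc B hB m (MSp.mbot Ω)).1 ω = m.1 ω from pcf_of_mem hωB] at h1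
  have hub : ∀ m ∈ SSup P F s, m.1 ≤ᵐ[P] (MSp.pc B hB gt (MSp.mtop Ω)).1 := by
    intro m hm
    filter_upwards [step1 m hm] with ω h1
    by_cases hω : ω ∈ B
    · rw [show (MSp.pc B hB gt (MSp.mtop Ω)).1 ω = gt.1 ω from pcf_of_mem hω]; exact h1 hω
    · rw [show (MSp.pc B hB gt (MSp.mtop Ω)).1 ω = ⊤ from pcf_of_not_mem hω]; exact le_top
  filter_upwards [hgs.2 _ hub] with ω h1 hωB
  rwa [show (MSp.pc B hB gt (MSp.mtop Ω)).1 ω = gt.1 ω from pcf_of_mem hωB] at h1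

lemma le_of_essInfM_lt (P : Measure Ω) (F : MSp Ω → MSp Ω)
    (hFloc : LocalAE P F) (hFinc : IncreasingAE P F)
    {s g : MSp Ω} (n : MSp Ω) (hg : IsEssInfM P (SInf P F s) g) :
    ∀ᵐ ω ∂P, g.1 ω < n.1 ω → s.1 ω ≤ (F (MSp.mtop Ω)).1 ω → s.1 ω ≤ (F n).1 ω := by
  set N : Set Ω := {ω | g.1 ω < n.1 ω} ∩
    ({ω | s.1 ω ≤ (F (MSp.mtop Ω)).1 ω} ∩ {ω | (F n).1 ω < s.1 ω}) with hNdef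
  have hNm : MeasurableSet N :=
    (measurableSet_lt g.2 n.2).inter
      ((measurableSet_le s.2 (F (MSp.mtop Ω)).2).inter (measurableSet_lt (F n).2 s.2))
  have step1 : ∀ m ∈ SInf P F s, ∀ᵐ ω ∂P, ω ∈ N → n.1 ω ≤ m.1 ω := by
    intro m hm
    set E : Set Ω := N ∩ {ω | m.1 ω < n.1 ω} with hEdef
    have hEm : MeasurableSet E := hNm.inter (measurableSet_lt m.2 n.2)
    have hpt : (MSp.pc E hEm m n).1 ≤ᵐ[P] n.1 := by
      apply Filter.Eventually.of_forall; intro ω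
      by_cases hω : ω ∈ E
      · rw [show (MSp.pc E hEm m n).1 ω = m.1 ω from pcf_of_mem hω]; exact le_of_lt hω.2
      · rw [show (MSp.pc E hEm m n).1 ω = n.1 ω from pcf_of_not_mem hω]
    filter_upwards [hFinc _ _ hpt, hFloc E hEm m n, hm] with ω h1 h2 h3 hωN
    by_contra hc
    have hωE : ω ∈ E := ⟨hωN, not_le.mp hc⟩
    rw [h2, pcf_of_mem hωE] at h1
    exact absurd (lt_of_le_of_lt (le_trans (h3 hωN.2.1) h1) hωN.2.2) (lt_irrefl _)
  have hlb : ∀ m ∈ SInf P F s, (MSp.pc N hNm n (MSp.mbot Ω)).1 ≤ᵐ[P] m.1 := by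
    intro m hm
    filter_upwards [step1 m hm] with ω h1
    by_cases hω : ω ∈ N
    · rw [show (MSp.pc N hNm n (MSp.mbot Ω)).1 ω = n.1 ω from pcf_of_mem hω]; exact h1 hω
    · rw [show (MSp.pc N hNm n (MSp.mbot Ω)).1 ω = ⊥ from pcf_of_not_mem hω]; exact bot_le
  filter_upwards [hg.2 _ hlb] with ω h1 hgn hAs
  by_contra hc
  have hωN : ω ∈ N := ⟨hgn, hAs, not_le.mp hc⟩
  rw [show (MSp.pc N hNm n (MSp.mbot Ω)).1 ω = n.1 ω from pcf_of_mem hωN] at h1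
  exact absurd (lt_of_le_of_lt h1 hgn) (lt_irrefl _)

lemma ge_of_essInfM_gt (P : Measure Ω) (F : MSp Ω → MSp Ω) (hFloc : LocalAE P F)
    {s g : MSp Ω} (n : MSp Ω) (hg : IsEssInfM P (SInf P F s) g) :
    ∀ᵐ ω ∂P, n.1 ω < g.1 ω → s.1 ω ≤ (F (MSp.mtop Ω)).1 ω → (F n).1 ω ≤ s.1 ω := by
  set E : Set Ω := {ω | n.1 ω < g.1 ω} ∩
    ({ω | s.1 ω ≤ (F (MSp.mtop Ω)).1 ω} ∩ {ω | s.1 ω < (F n).1 ω}) with hEdef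
  have hEm : MeasurableSet E :=
    (measurableSet_lt n.2 g.2).inter
      ((measurableSet_le s.2 (F (MSp.mtop Ω)).2).inter (measurableSet_lt s.2 (F n).2))
  have hmem : MSp.pc E hEm n (MSp.mtop Ω) ∈ SInf P F s :=
    mem_SInf_patch P F hFloc hEm
      (Filter.Eventually.of_forall (fun ω hωE _ => le_of_lt hωE.2.2))
  filter_upwards [hg.1 _ hmem] with ω h1 hng hAs
  by_contra hc
  have hωE : ω ∈ E := ⟨hng, hAs, not_le.mp hc⟩
  rw [show (MSp.pc E hEm n (MSp.mtop Ω)).1 ω = n.1 ω from pcf_of_mem hωE] at h1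
  exact absurd (lt_of_le_of_lt h1 hng) (lt_irrefl _)

lemma ge_of_essSupM_lt (P : Measure Ω) (F : MSp Ω → MSp Ω)
    (hFloc : LocalAE P F) (hFinc : IncreasingAE P F)
    {s g : MSp Ω} (n : MSp Ω) (hg : IsEssSupM P (SSup P F s) g) :
    ∀ᵐ ω ∂P, n.1 ω < g.1 ω → (F (MSp.mbot Ω)).1 ω ≤ s.1 ω → (F n).1 ω ≤ s.1 ω := by
  set N : Set Ω := {ω | n.1 ω < g.1 ω} ∩
    ({ω | (F (MSp.mbot Ω)).1 ω ≤ s.1 ω} ∩ {ω | s.1 ω < (F n).1 ω}) with hNdef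
  have hNm : MeasurableSet N :=
    (measurableSet_lt n.2 g.2).inter
      ((measurableSet_le (F (MSp.mbot Ω)).2 s.2).inter (measurableSet_lt s.2 (F n).2))
  have step1 : ∀ m ∈ SSup P F s, ∀ᵐ ω ∂P, ω ∈ N → m.1 ω ≤ n.1 ω := by
    intro m hm
    set E : Set Ω := N ∩ {ω | n.1 ω < m.1 ω} with hEdef
    have hEm : MeasurableSet E := hNm.inter (measurableSet_lt n.2 m.2)
    have hpt : n.1 ≤ᵐ[P] (MSp.pc E hEm m n).1 := by
      apply Filter.Eventually.of_forall; intro ω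
      by_cases hω : ω ∈ E
      · rw [show (MSp.pc E hEm m n).1 ω = m.1 ω from pcf_of_mem hω]; exact le_of_lt hω.2
      · rw [show (MSp.pc E hEm m n).1 ω = n.1 ω from pcf_of_not_mem hω]
    filter_upwards [hFinc _ _ hpt, hFloc E hEm m n, hm] with ω h1 h2 h3 hωN
    by_contra hc
    have hωE : ω ∈ E := ⟨hωN, not_le.mp hc⟩
    rw [h2, pcf_of_mem hωE] at h1
    exact absurd (lt_of_lt_of_le (lt_of_lt_of_le hωN.2.2 h1) (h3 hωN.2.1)) (lt_irrefl _)
  have hub : ∀ m ∈ SSup P F s, m.1 ≤ᵐ[P] (MSp.pc N hNm n (MSp.mtop Ω)).1 := by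
    intro m hm
    filter_upwards [step1 m hm] with ω h1
    by_cases hω : ω ∈ N
    · rw [show (MSp.pc N hNm n (MSp.mtop Ω)).1 ω = n.1 ω from pcf_of_mem hω]; exact h1 hω
    · rw [show (MSp.pc N hNm n (MSp.mtop Ω)).1 ω = ⊤ from pcf_of_not_mem hω]; exact le_top
  filter_upwards [hg.2 _ hub] with ω h1 hgn hBs
  by_contra hc
  have hωN : ω ∈ N := ⟨hgn, hBs, not_le.mp hc⟩
  rw [show (MSp.pc N hNm n (MSp.mtop Ω)).1 ω = n.1 ω from pcf_of_mem hωN] at h1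
  exact absurd (lt_of_lt_of_le hgn h1) (lt_irrefl _)

lemma le_of_essSupM_gt (P : Measure Ω) (F : MSp Ω → MSp Ω) (hFloc : LocalAE P F)
    {s g : MSp Ω} (n : MSp Ω) (hg : IsEssSupM P (SSup P F s) g) :
    ∀ᵐ ω ∂P, g.1 ω < n.1 ω → (F (MSp.mbot Ω)).1 ω ≤ s.1 ω → s.1 ω ≤ (F n).1 ω := by
  set E : Set Ω := {ω | g.1 ω < n.1 ω} ∩
    ({ω | (F (MSp.mbot Ω)).1 ω ≤ s.1 ω} ∩ {ω | (F n).1 ω < s.1 ω}) with hEdef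
  have hEm : MeasurableSet E :=
    (measurableSet_lt g.2 n.2).inter
      ((measurableSet_le (F (MSp.mbot Ω)).2 s.2).inter (measurableSet_lt (F n).2 s.2))
  have hmem : MSp.pc E hEm n (MSp.mbot Ω) ∈ SSup P F s :=
    mem_SSup_patch P F hFloc hEm
      (Filter.Eventually.of_forall (fun ω hωE _ => le_of_lt hωE.2.2))
  filter_upwards [hg.1 _ hmem] with ω h1 hgn hBs
  by_contra hc
  have hωE : ω ∈ E := ⟨hgn, hBs, not_le.mp hc⟩
  rw [show (MSp.pc E hEm n (MSp.mbot Ω)).1 ω = n.1 ω from pcf_of_mem hωE] at h1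
  exact absurd (lt_of_lt_of_le hgn h1) (lt_irrefl _)

lemma isCondInverse_of_leftInv (P : Measure Ω) (F Gl : MSp Ω → MSp Ω)
    (hFloc : LocalAE P F) (hFinc : IncreasingAE P F)
    (hGl : IsCondLeftInv P F Gl) : IsCondInverse P F Gl := by
  refine ⟨?_, ?_, ?_, ?_⟩
  · -- LocalAE
    intro A hA s t
    obtain ⟨hutop, gu, hgu, hua⟩ := hGl (MSp.pc A hA s t)
    obtain ⟨hstop, gs, hgs, hsa⟩ := hGl s
    obtain ⟨httop, gt', hgt, hta⟩ := hGl t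
    have hBsm : MeasurableSet (A ∩ {ω | s.1 ω ≤ (F (MSp.mtop Ω)).1 ω}) :=
      hA.inter (measurableSet_le s.2 (F (MSp.mtop Ω)).2)
    have hBtm : MeasurableSet (Aᶜ ∩ {ω | t.1 ω ≤ (F (MSp.mtop Ω)).1 ω}) :=
      hA.compl.inter (measurableSet_le t.2 (F (MSp.mtop Ω)).2)
    have h1 : ∀ᵐ ω ∂P, ω ∈ A ∩ {ω | s.1 ω ≤ (F (MSp.mtop Ω)).1 ω} → gu.1 ω ≤ gs.1 ω :=
      essInfM_mono_on P F hFloc hBsm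
        (Filter.Eventually.of_forall fun ω hω => le_of_eq (pcf_of_mem hω.1))
        (Filter.Eventually.of_forall fun ω hω => hω.2) hgu hgs
    have h2 : ∀ᵐ ω ∂P, ω ∈ A ∩ {ω | s.1 ω ≤ (F (MSp.mtop Ω)).1 ω} → gs.1 ω ≤ gu.1 ω :=
      essInfM_mono_on P F hFloc hBsm
        (Filter.Eventually.of_forall fun ω hω => le_of_eq (pcf_of_mem hω.1).symm)
        (Filter.Eventually.of_forall fun ω hω => by
          rw [show (MSp.pc A hA s t).1 ω = s.1 ω from pcf_of_mem hω.1]; exact hω.2)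
        hgs hgu
    have h3 : ∀ᵐ ω ∂P, ω ∈ Aᶜ ∩ {ω | t.1 ω ≤ (F (MSp.mtop Ω)).1 ω} → gu.1 ω ≤ gt'.1 ω :=
      essInfM_mono_on P F hFloc hBtm
        (Filter.Eventually.of_forall fun ω hω => le_of_eq (pcf_of_not_mem hω.1))
        (Filter.Eventually.of_forall fun ω hω => hω.2) hgu hgt
    have h4 : ∀ᵐ ω ∂P, ω ∈ Aᶜ ∩ {ω | t.1 ω ≤ (F (MSp.mtop Ω)).1 ω} → gt'.1 ω ≤ gu.1 ω :=
      essInfM_mono_on P F hFloc hBtm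
        (Filter.Eventually.of_forall fun ω hω => le_of_eq (pcf_of_not_mem hω.1).symm)
        (Filter.Eventually.of_forall fun ω hω => by
          rw [show (MSp.pc A hA s t).1 ω = t.1 ω from pcf_of_not_mem hω.1]; exact hω.2)
        hgt hgu
    filter_upwards [hua, hsa, hta, hutop, hstop, httop, h1, h2, h3, h4] with
      ω hua hsa hta hutop hstop httop h1 h2 h3 h4
    by_cases hωA : ω ∈ A
    · rw [pcf_of_mem hωA]
      by_cases hAs : s.1 ω ≤ (F (MSp.mtop Ω)).1 ω
      · have hAu : (MSp.pc A hA s t).1 ω ≤ (F (MSp.mtop Ω)).1 ω := by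
          rw [show (MSp.pc A hA s t).1 ω = s.1 ω from pcf_of_mem hωA]; exact hAs
        rw [hua hAu, hsa hAs]
        exact le_antisymm (h1 ⟨hωA, hAs⟩) (h2 ⟨hωA, hAs⟩)
      · have hAu : ¬ (MSp.pc A hA s t).1 ω ≤ (F (MSp.mtop Ω)).1 ω := by
          rw [show (MSp.pc A hA s t).1 ω = s.1 ω from pcf_of_mem hωA]; exact hAs
        rw [hutop hAu, hstop hAs]
    · rw [pcf_of_not_mem hωA]
      by_cases hAt : t.1 ω ≤ (F (MSp.mtop Ω)).1 ω
      · have hAu : (MSp.pc A hA s t).1 ω ≤ (F (MSp.mtop Ω)).1 ω := by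
          rw [show (MSp.pc A hA s t).1 ω = t.1 ω from pcf_of_not_mem hωA]; exact hAt
        rw [hua hAu, hta hAt]
        exact le_antisymm (h3 ⟨hωA, hAt⟩) (h4 ⟨hωA, hAt⟩)
      · have hAu : ¬ (MSp.pc A hA s t).1 ω ≤ (F (MSp.mtop Ω)).1 ω := by
          rw [show (MSp.pc A hA s t).1 ω = t.1 ω from pcf_of_not_mem hωA]; exact hAt
        rw [hutop hAu, httop hAt]
  · -- IncreasingAE
    intro s t hst
    obtain ⟨hstop, gs, hgs, hsa⟩ := hGl s
    obtain ⟨httop, gt', hgt, hta⟩ := hGl t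
    have hB : MeasurableSet {ω | t.1 ω ≤ (F (MSp.mtop Ω)).1 ω} :=
      measurableSet_le t.2 (F (MSp.mtop Ω)).2
    have hmono := essInfM_mono_on P F hFloc hB
      (hst.mono fun ω h _ => h)
      (Filter.Eventually.of_forall fun ω hω => hω) hgs hgt
    filter_upwards [hmono, hst, hsa, hta, httop] with ω hmono hst hsa hta httop
    by_cases hωB : t.1 ω ≤ (F (MSp.mtop Ω)).1 ω
    · rw [hsa (le_trans hst hωB), hta hωB]; exact hmono hωB
    · rw [httop hωB]; exact le_top
  · -- RespectsAE
    intro s t hst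
    obtain ⟨hstop, gs, hgs, hsa⟩ := hGl s
    obtain ⟨httop, gt', hgt, hta⟩ := hGl t
    have hB : MeasurableSet {ω | s.1 ω ≤ (F (MSp.mtop Ω)).1 ω} :=
      measurableSet_le s.2 (F (MSp.mtop Ω)).2
    have h1 := essInfM_mono_on P F hFloc hB
      (hst.mono fun ω h _ => le_of_eq h)
      (hst.mono fun ω h hω => by rw [← h]; exact hω) hgs hgt
    have h2 := essInfM_mono_on P F hFloc hB
      (hst.mono fun ω h _ => le_of_eq h.symm)
      (Filter.Eventually.of_forall fun ω hω => hω) hgt hgs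
    filter_upwards [hst, hsa, hta, hstop, httop, h1, h2] with ω hst hsa hta hstop httop h1 h2
    by_cases hωB : s.1 ω ≤ (F (MSp.mtop Ω)).1 ω
    · have hωB' : t.1 ω ≤ (F (MSp.mtop Ω)).1 ω := by rw [← hst]; exact hωB
      rw [hsa hωB, hta hωB']
      exact le_antisymm (h1 hωB) (h2 hωB)
    · have hωB' : ¬ t.1 ω ≤ (F (MSp.mtop Ω)).1 ω := by rw [← hst]; exact hωB
      rw [hstop hωB, httop hωB']
  · -- main inequalities
    intro Fm Fp hFm hFp s
    obtain ⟨hstop, g, hg, hsa⟩ := hGl s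
    refine ⟨?_, ?_, ?_⟩
    · obtain ⟨hmbot, hml, hhm, hma⟩ := hFm (Gl s)
      obtain ⟨hptop, hpr, hhp, hpa⟩ := hFp (Gl s)
      have hCm : MeasurableSet ({ω | (F (MSp.mbot Ω)).1 ω < s.1 ω} ∩
          {ω | s.1 ω < (F (MSp.mtop Ω)).1 ω}) :=
        (measurableSet_lt (F (MSp.mbot Ω)).2 s.2).inter
          (measurableSet_lt s.2 (F (MSp.mtop Ω)).2)
      -- right inequality
      set D : Set Ω := ({ω | (F (MSp.mbot Ω)).1 ω < s.1 ω} ∩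
          {ω | s.1 ω < (F (MSp.mtop Ω)).1 ω}) ∩ {ω | (Gl s).1 ω < ⊤} with hDdef
      have hDm : MeasurableSet D := hCm.inter (measurableSet_lt (Gl s).2 measurable_const)
      have hlb : ∀ f ∈ F '' {n : MSp Ω | ∀ᵐ ω ∂P, ω ∈ {ω' | (Gl s).1 ω' < ⊤} →
          (Gl s).1 ω < n.1 ω}, (MSp.pc D hDm s (MSp.mbot Ω)).1 ≤ᵐ[P] f.1 := by
        rintro f ⟨n, hn, rfl⟩
        filter_upwards [le_of_essInfM_lt P F hFloc hFinc n hg, hn, hsa] with ω h1 h2 h3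
        by_cases hω : ω ∈ D
        · rw [show (MSp.pc D hDm s (MSp.mbot Ω)).1 ω = s.1 ω from pcf_of_mem hω]
          have hAs : s.1 ω ≤ (F (MSp.mtop Ω)).1 ω := le_of_lt hω.1.2
          have hgn : g.1 ω < n.1 ω := by rw [← h3 hAs]; exact h2 hω.2
          exact h1 hgn hAs
        · rw [show (MSp.pc D hDm s (MSp.mbot Ω)).1 ω = ⊥ from pcf_of_not_mem hω]; exact bot_le
      have claimR : ∀ᵐ ω ∂P, (F (MSp.mbot Ω)).1 ω < s.1 ω → s.1 ω < (F (MSp.mtop Ω)).1 ω →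
          s.1 ω ≤ (Fp (Gl s)).1 ω := by
        filter_upwards [hhp.2 _ hlb, hpa, hptop] with ω h1 h2 h3 hb ht
        by_cases hT : (Gl s).1 ω = ⊤
        · rw [h3 hT]; exact le_top
        · have hlt : (Gl s).1 ω < ⊤ := lt_top_iff_ne_top.mpr hT
          rw [h2 hlt]
          have hωD : ω ∈ D := ⟨⟨hb, ht⟩, hlt⟩
          rw [show (MSp.pc D hDm s (MSp.mbot Ω)).1 ω = s.1 ω from pcf_of_mem hωD] at h1
          exact h1
      -- left inequality
      set D' : Set Ω := ({ω | (F (MSp.mbot Ω)).1 ω < s.1 ω} ∩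
          {ω | s.1 ω < (F (MSp.mtop Ω)).1 ω}) ∩ {ω | (⊥ : EReal) < (Gl s).1 ω} with hD'def
      have hD'm : MeasurableSet D' := hCm.inter (measurableSet_lt measurable_const (Gl s).2)
      have hub : ∀ f ∈ F '' {n : MSp Ω | ∀ᵐ ω ∂P, ω ∈ {ω' | (⊥ : EReal) < (Gl s).1 ω'} →
          n.1 ω < (Gl s).1 ω}, f.1 ≤ᵐ[P] (MSp.pc D' hD'm s (MSp.mtop Ω)).1 := by
        rintro f ⟨n, hn, rfl⟩
        filter_upwards [ge_of_essInfM_gt P F hFloc n hg, hn, hsa] with ω h1 h2 h3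
        by_cases hω : ω ∈ D'
        · rw [show (MSp.pc D' hD'm s (MSp.mtop Ω)).1 ω = s.1 ω from pcf_of_mem hω]
          have hAs : s.1 ω ≤ (F (MSp.mtop Ω)).1 ω := le_of_lt hω.1.2
          have hng : n.1 ω < g.1 ω := by rw [← h3 hAs]; exact h2 hω.2
          exact h1 hng hAs
        · rw [show (MSp.pc D' hD'm s (MSp.mtop Ω)).1 ω = ⊤ from pcf_of_not_mem hω]; exact le_top
      have claimL : ∀ᵐ ω ∂P, (F (MSp.mbot Ω)).1 ω < s.1 ω → s.1 ω < (F (MSp.mtop Ω)).1 ω →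
          (Fm (Gl s)).1 ω ≤ s.1 ω := by
        filter_upwards [hhm.2 _ hub, hma, hmbot] with ω h1 h2 h3 hb ht
        by_cases hB : (Gl s).1 ω = ⊥
        · rw [h3 hB]; exact bot_le
        · have hlt : (⊥ : EReal) < (Gl s).1 ω := bot_lt_iff_ne_bot.mpr hB
          rw [h2 hlt]
          have hωD : ω ∈ D' := ⟨⟨hb, ht⟩, hlt⟩
          rw [show (MSp.pc D' hD'm s (MSp.mtop Ω)).1 ω = s.1 ω from pcf_of_mem hωD] at h1
          exact h1
      filter_upwards [claimL, claimR] with ω h1 h2 hb ht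
      exact ⟨h1 hb ht, h2 hb ht⟩
    · -- Gl s = ⊥ on {s < F ⊥}
      have hbt : (F (MSp.mbot Ω)).1 ≤ᵐ[P] (F (MSp.mtop Ω)).1 :=
        hFinc _ _ (Filter.Eventually.of_forall fun ω => bot_le)
      set B : Set Ω := {ω | s.1 ω < (F (MSp.mbot Ω)).1 ω} ∩
        {ω | s.1 ω ≤ (F (MSp.mtop Ω)).1 ω} with hBdef
      have hBm : MeasurableSet B := (measurableSet_lt s.2 (F (MSp.mbot Ω)).2).inter
        (measurableSet_le s.2 (F (MSp.mtop Ω)).2)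
      have hmem : MSp.pc B hBm (MSp.mbot Ω) (MSp.mtop Ω) ∈ SInf P F s :=
        mem_SInf_patch P F hFloc hBm
          (Filter.Eventually.of_forall fun ω hω _ => le_of_lt hω.1)
      filter_upwards [hg.1 _ hmem, hsa, hbt] with ω h1 h2 h3 hlt
      have hAs : s.1 ω ≤ (F (MSp.mtop Ω)).1 ω := le_trans (le_of_lt hlt) h3
      rw [h2 hAs]
      have hωB : ω ∈ B := ⟨hlt, hAs⟩
      rw [show (MSp.pc B hBm (MSp.mbot Ω) (MSp.mtop Ω)).1 ω = ⊥ from pcf_of_mem hωB] at h1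
      exact le_bot_iff.mp h1
    · -- Gl s = ⊤ on {F ⊤ < s}
      filter_upwards [hstop] with ω h1 hlt
      exact h1 (not_le.mpr hlt)

lemma isCondInverse_of_rightInv (P : Measure Ω) (F Gr : MSp Ω → MSp Ω)
    (hFloc : LocalAE P F) (hFinc : IncreasingAE P F)
    (hGr : IsCondRightInv P F Gr) : IsCondInverse P F Gr := by
  refine ⟨?_, ?_, ?_, ?_⟩
  · -- LocalAE
    intro A hA s t
    obtain ⟨hubot, gu, hgu, hua⟩ := hGr (MSp.pc A hA s t)
    obtain ⟨hsbot, gs, hgs, hsa⟩ := hGr s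
    obtain ⟨htbot, gt', hgt, hta⟩ := hGr t
    have hBsm : MeasurableSet (A ∩ {ω | (F (MSp.mbot Ω)).1 ω ≤ s.1 ω}) :=
      hA.inter (measurableSet_le (F (MSp.mbot Ω)).2 s.2)
    have hBtm : MeasurableSet (Aᶜ ∩ {ω | (F (MSp.mbot Ω)).1 ω ≤ t.1 ω}) :=
      hA.compl.inter (measurableSet_le (F (MSp.mbot Ω)).2 t.2)
    have h1 : ∀ᵐ ω ∂P, ω ∈ A ∩ {ω | (F (MSp.mbot Ω)).1 ω ≤ s.1 ω} → gu.1 ω ≤ gs.1 ω :=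
      essSupM_mono_on P F hFloc hBsm
        (Filter.Eventually.of_forall fun ω hω => le_of_eq (pcf_of_mem hω.1))
        (Filter.Eventually.of_forall fun ω hω => by
          rw [show (MSp.pc A hA s t).1 ω = s.1 ω from pcf_of_mem hω.1]; exact hω.2)
        hgu hgs
    have h2 : ∀ᵐ ω ∂P, ω ∈ A ∩ {ω | (F (MSp.mbot Ω)).1 ω ≤ s.1 ω} → gs.1 ω ≤ gu.1 ω :=
      essSupM_mono_on P F hFloc hBsm
        (Filter.Eventually.of_forall fun ω hω => le_of_eq (pcf_of_mem hω.1).symm)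
        (Filter.Eventually.of_forall fun ω hω => hω.2) hgs hgu
    have h3 : ∀ᵐ ω ∂P, ω ∈ Aᶜ ∩ {ω | (F (MSp.mbot Ω)).1 ω ≤ t.1 ω} → gu.1 ω ≤ gt'.1 ω :=
      essSupM_mono_on P F hFloc hBtm
        (Filter.Eventually.of_forall fun ω hω => le_of_eq (pcf_of_not_mem hω.1))
        (Filter.Eventually.of_forall fun ω hω => by
          rw [show (MSp.pc A hA s t).1 ω = t.1 ω from pcf_of_not_mem hω.1]; exact hω.2)
        hgu hgt
    have h4 : ∀ᵐ ω ∂P, ω ∈ Aᶜ ∩ {ω | (F (MSp.mbot Ω)).1 ω ≤ t.1 ω} → gt'.1 ω ≤ gu.1 ω :=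
      essSupM_mono_on P F hFloc hBtm
        (Filter.Eventually.of_forall fun ω hω => le_of_eq (pcf_of_not_mem hω.1).symm)
        (Filter.Eventually.of_forall fun ω hω => hω.2) hgt hgu
    filter_upwards [hua, hsa, hta, hubot, hsbot, htbot, h1, h2, h3, h4] with
      ω hua hsa hta hubot hsbot htbot h1 h2 h3 h4
    by_cases hωA : ω ∈ A
    · rw [pcf_of_mem hωA]
      by_cases hBs : (F (MSp.mbot Ω)).1 ω ≤ s.1 ω
      · have hBu : (F (MSp.mbot Ω)).1 ω ≤ (MSp.pc A hA s t).1 ω := by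
          rw [show (MSp.pc A hA s t).1 ω = s.1 ω from pcf_of_mem hωA]; exact hBs
        rw [hua hBu, hsa hBs]
        exact le_antisymm (h1 ⟨hωA, hBs⟩) (h2 ⟨hωA, hBs⟩)
      · have hBu : ¬ (F (MSp.mbot Ω)).1 ω ≤ (MSp.pc A hA s t).1 ω := by
          rw [show (MSp.pc A hA s t).1 ω = s.1 ω from pcf_of_mem hωA]; exact hBs
        rw [hubot hBu, hsbot hBs]
    · rw [pcf_of_not_mem hωA]
      by_cases hBt : (F (MSp.mbot Ω)).1 ω ≤ t.1 ω
      · have hBu : (F (MSp.mbot Ω)).1 ω ≤ (MSp.pc A hA s t).1 ω := by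
          rw [show (MSp.pc A hA s t).1 ω = t.1 ω from pcf_of_not_mem hωA]; exact hBt
        rw [hua hBu, hta hBt]
        exact le_antisymm (h3 ⟨hωA, hBt⟩) (h4 ⟨hωA, hBt⟩)
      · have hBu : ¬ (F (MSp.mbot Ω)).1 ω ≤ (MSp.pc A hA s t).1 ω := by
          rw [show (MSp.pc A hA s t).1 ω = t.1 ω from pcf_of_not_mem hωA]; exact hBt
        rw [hubot hBu, htbot hBt]
  · -- IncreasingAE
    intro s t hst
    obtain ⟨hsbot, gs, hgs, hsa⟩ := hGr s
    obtain ⟨htbot, gt', hgt, hta⟩ := hGr t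
    have hB : MeasurableSet {ω | (F (MSp.mbot Ω)).1 ω ≤ s.1 ω} :=
      measurableSet_le (F (MSp.mbot Ω)).2 s.2
    have hmono := essSupM_mono_on P F hFloc hB
      (hst.mono fun ω h _ => h)
      (Filter.Eventually.of_forall fun ω hω => hω) hgs hgt
    filter_upwards [hmono, hst, hsa, hta, hsbot] with ω hmono hst hsa hta hsbot
    by_cases hωB : (F (MSp.mbot Ω)).1 ω ≤ s.1 ω
    · rw [hsa hωB, hta (le_trans hωB hst)]; exact hmono hωB
    · rw [hsbot hωB]; exact bot_le
  · -- RespectsAE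
    intro s t hst
    obtain ⟨hsbot, gs, hgs, hsa⟩ := hGr s
    obtain ⟨htbot, gt', hgt, hta⟩ := hGr t
    have hB : MeasurableSet {ω | (F (MSp.mbot Ω)).1 ω ≤ s.1 ω} :=
      measurableSet_le (F (MSp.mbot Ω)).2 s.2
    have h1 := essSupM_mono_on P F hFloc hB
      (hst.mono fun ω h _ => le_of_eq h)
      (Filter.Eventually.of_forall fun ω hω => hω) hgs hgt
    have h2 := essSupM_mono_on P F hFloc hB
      (hst.mono fun ω h _ => le_of_eq h.symm)
      (hst.mono fun ω h hω => by rw [← h]; exact hω) hgt hgs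
    filter_upwards [hst, hsa, hta, hsbot, htbot, h1, h2] with ω hst hsa hta hsbot htbot h1 h2
    by_cases hωB : (F (MSp.mbot Ω)).1 ω ≤ s.1 ω
    · have hωB' : (F (MSp.mbot Ω)).1 ω ≤ t.1 ω := by rw [← hst]; exact hωB
      rw [hsa hωB, hta hωB']
      exact le_antisymm (h1 hωB) (h2 hωB)
    · have hωB' : ¬ (F (MSp.mbot Ω)).1 ω ≤ t.1 ω := by rw [← hst]; exact hωB
      rw [hsbot hωB, htbot hωB']
  · -- main inequalities
    intro Fm Fp hFm hFp s
    obtain ⟨hsbot, g, hg, hsa⟩ := hGr s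
    refine ⟨?_, ?_, ?_⟩
    · obtain ⟨hmbot, hml, hhm, hma⟩ := hFm (Gr s)
      obtain ⟨hptop, hpr, hhp, hpa⟩ := hFp (Gr s)
      have hCm : MeasurableSet ({ω | (F (MSp.mbot Ω)).1 ω < s.1 ω} ∩
          {ω | s.1 ω < (F (MSp.mtop Ω)).1 ω}) :=
        (measurableSet_lt (F (MSp.mbot Ω)).2 s.2).inter
          (measurableSet_lt s.2 (F (MSp.mtop Ω)).2)
      -- right inequality
      set D : Set Ω := ({ω | (F (MSp.mbot Ω)).1 ω < s.1 ω} ∩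
          {ω | s.1 ω < (F (MSp.mtop Ω)).1 ω}) ∩ {ω | (Gr s).1 ω < ⊤} with hDdef
      have hDm : MeasurableSet D := hCm.inter (measurableSet_lt (Gr s).2 measurable_const)
      have hlb : ∀ f ∈ F '' {n : MSp Ω | ∀ᵐ ω ∂P, ω ∈ {ω' | (Gr s).1 ω' < ⊤} →
          (Gr s).1 ω < n.1 ω}, (MSp.pc D hDm s (MSp.mbot Ω)).1 ≤ᵐ[P] f.1 := by
        rintro f ⟨n, hn, rfl⟩
        filter_upwards [le_of_essSupM_gt P F hFloc n hg, hn, hsa] with ω h1 h2 h3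
        by_cases hω : ω ∈ D
        · rw [show (MSp.pc D hDm s (MSp.mbot Ω)).1 ω = s.1 ω from pcf_of_mem hω]
          have hBs : (F (MSp.mbot Ω)).1 ω ≤ s.1 ω := le_of_lt hω.1.1
          have hgn : g.1 ω < n.1 ω := by rw [← h3 hBs]; exact h2 hω.2
          exact h1 hgn hBs
        · rw [show (MSp.pc D hDm s (MSp.mbot Ω)).1 ω = ⊥ from pcf_of_not_mem hω]; exact bot_le
      have claimR : ∀ᵐ ω ∂P, (F (MSp.mbot Ω)).1 ω < s.1 ω → s.1 ω < (F (MSp.mtop Ω)).1 ω →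
          s.1 ω ≤ (Fp (Gr s)).1 ω := by
        filter_upwards [hhp.2 _ hlb, hpa, hptop] with ω h1 h2 h3 hb ht
        by_cases hT : (Gr s).1 ω = ⊤
        · rw [h3 hT]; exact le_top
        · have hlt : (Gr s).1 ω < ⊤ := lt_top_iff_ne_top.mpr hT
          rw [h2 hlt]
          have hωD : ω ∈ D := ⟨⟨hb, ht⟩, hlt⟩
          rw [show (MSp.pc D hDm s (MSp.mbot Ω)).1 ω = s.1 ω from pcf_of_mem hωD] at h1
          exact h1
      -- left inequality
      set D' : Set Ω := ({ω | (F (MSp.mbot Ω)).1 ω < s.1 ω} ∩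
          {ω | s.1 ω < (F (MSp.mtop Ω)).1 ω}) ∩ {ω | (⊥ : EReal) < (Gr s).1 ω} with hD'def
      have hD'm : MeasurableSet D' := hCm.inter (measurableSet_lt measurable_const (Gr s).2)
      have hub : ∀ f ∈ F '' {n : MSp Ω | ∀ᵐ ω ∂P, ω ∈ {ω' | (⊥ : EReal) < (Gr s).1 ω'} →
          n.1 ω < (Gr s).1 ω}, f.1 ≤ᵐ[P] (MSp.pc D' hD'm s (MSp.mtop Ω)).1 := by
        rintro f ⟨n, hn, rfl⟩
        filter_upwards [ge_of_essSupM_lt P F hFloc hFinc n hg, hn, hsa] with ω h1 h2 h3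
        by_cases hω : ω ∈ D'
        · rw [show (MSp.pc D' hD'm s (MSp.mtop Ω)).1 ω = s.1 ω from pcf_of_mem hω]
          have hBs : (F (MSp.mbot Ω)).1 ω ≤ s.1 ω := le_of_lt hω.1.1
          have hng : n.1 ω < g.1 ω := by rw [← h3 hBs]; exact h2 hω.2
          exact h1 hng hBs
        · rw [show (MSp.pc D' hD'm s (MSp.mtop Ω)).1 ω = ⊤ from pcf_of_not_mem hω]; exact le_top
      have claimL : ∀ᵐ ω ∂P, (F (MSp.mbot Ω)).1 ω < s.1 ω → s.1 ω < (F (MSp.mtop Ω)).1 ω →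
          (Fm (Gr s)).1 ω ≤ s.1 ω := by
        filter_upwards [hhm.2 _ hub, hma, hmbot] with ω h1 h2 h3 hb ht
        by_cases hB : (Gr s).1 ω = ⊥
        · rw [h3 hB]; exact bot_le
        · have hlt : (⊥ : EReal) < (Gr s).1 ω := bot_lt_iff_ne_bot.mpr hB
          rw [h2 hlt]
          have hωD : ω ∈ D' := ⟨⟨hb, ht⟩, hlt⟩
          rw [show (MSp.pc D' hD'm s (MSp.mtop Ω)).1 ω = s.1 ω from pcf_of_mem hωD] at h1
          exact h1
      filter_upwards [claimL, claimR] with ω h1 h2 hb ht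
      exact ⟨h1 hb ht, h2 hb ht⟩
    · -- Gr s = ⊥ on {s < F ⊥}
      filter_upwards [hsbot] with ω h1 hlt
      exact h1 (not_le.mpr hlt)
    · -- Gr s = ⊤ on {F ⊤ < s}
      have hbt : (F (MSp.mbot Ω)).1 ≤ᵐ[P] (F (MSp.mtop Ω)).1 :=
        hFinc _ _ (Filter.Eventually.of_forall fun ω => bot_le)
      set B : Set Ω := {ω | (F (MSp.mtop Ω)).1 ω < s.1 ω} ∩
        {ω | (F (MSp.mbot Ω)).1 ω ≤ s.1 ω} with hBdef
      have hBm : MeasurableSet B := (measurableSet_lt (F (MSp.mtop Ω)).2 s.2).inter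
        (measurableSet_le (F (MSp.mbot Ω)).2 s.2)
      have hmem : MSp.pc B hBm (MSp.mtop Ω) (MSp.mbot Ω) ∈ SSup P F s :=
        mem_SSup_patch P F hFloc hBm
          (Filter.Eventually.of_forall fun ω hω _ => le_of_lt hω.1)
      filter_upwards [hg.1 _ hmem, hsa, hbt] with ω h1 h2 h3 hlt
      have hBs : (F (MSp.mbot Ω)).1 ω ≤ s.1 ω := le_trans h3 (le_of_lt hlt)
      rw [h2 hBs]
      have hωB : ω ∈ B := ⟨hlt, hBs⟩
      rw [show (MSp.pc B hBm (MSp.mtop Ω) (MSp.mbot Ω)).1 ω = ⊤ from pcf_of_mem hωB] at h1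
      exact top_le_iff.mp h1

/-- Every conditional left-inverse and every conditional right-inverse of a local,
increasing map `F : M → M` respecting a.e. equality is a conditional inverse of `F`. -/
theorem leftRightInv_isCondInverse (P : Measure Ω) [IsProbabilityMeasure P]
    (F Gl Gr : MSp Ω → MSp Ω)
    (hFloc : LocalAE P F) (hFinc : IncreasingAE P F) (hFae : RespectsAE P F)
    (hGl : IsCondLeftInv P F Gl) (hGr : IsCondRightInv P F Gr) :
    IsCondInverse P F Gl ∧ IsCondInverse P F Gr := by
  exact ⟨isCondInverse_of_leftInv P F Gl hFloc hFinc hGl,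
    isCondInverse_of_rightInv P F Gr hFloc hFinc hGr⟩
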